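/- Let n ≥ 1 be an integer. Define a_{2m} = m·(2m−2)! / (2^{3m−1}·(m!)²·∏_{j=0}^{m−1}(n+2j)) for m ≥ 1 and b_{2m} = 1/(2^{3m}·m!). Then a_{2m}/b_{2m} = 2m·(2m−2)! / (m!·∏_{j=0}^{m−1}(n+2j)) tends to +∞ as m → ∞. -/

import Mathlib

noncomputable def hplaneCoef (n m : ℕ) : ℝ :=
  ((m : ℝ) * (Nat.factorial (2*m - 2) : ℝ)) /
    ((2:ℝ)^(3*m - 1) * ((Nat.factorial m : ℝ))^2 *
      ∏ j ∈ Finset.range m, ((n : ℝ) + 2*(j : ℝ)))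

/-- The coefficient of `r^{2m}` in `e^{r²/8}`. -/
noncomputable def gaussCoef (m : ℕ) : ℝ := 1 / ((2:ℝ)^(3*m) * (Nat.factorial m : ℝ))

noncomputable def ratioG (n m : ℕ) : ℝ :=
  (2*(m : ℝ) * (Nat.factorial (2*m - 2) : ℝ)) /
    ((Nat.factorial m : ℝ) * ∏ j ∈ Finset.range m, ((n : ℝ) + 2*(j : ℝ)))

lemma prodP_pos (n : ℕ) (hn : 1 ≤ n) (m : ℕ) :
    0 < ∏ j ∈ Finset.range m, ((n : ℝ) + 2*(j : ℝ)) := by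
  apply Finset.prod_pos
  intro j _
  have h1 : (1:ℝ) ≤ (n:ℝ) := by exact_mod_cast hn
  have h2 : (0:ℝ) ≤ (j:ℝ) := Nat.cast_nonneg j
  linarith

lemma ratioG_pos (n : ℕ) (hn : 1 ≤ n) (m : ℕ) (hm : 1 ≤ m) : 0 < ratioG n m := by
  unfold ratioG
  have hP := prodP_pos n hn m
  have hf : (0:ℝ) < (Nat.factorial m : ℝ) := by exact_mod_cast Nat.factorial_pos m
  have hf2 : (0:ℝ) < (Nat.factorial (2*m - 2) : ℝ) := by
    exact_mod_cast Nat.factorial_pos _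
  have hm' : (0:ℝ) < (m:ℝ) := by exact_mod_cast hm
  positivity

lemma hplane_div_gauss (n : ℕ) (hn : 1 ≤ n) (m : ℕ) (hm : 1 ≤ m) :
    hplaneCoef n m / gaussCoef m = ratioG n m := by
  unfold hplaneCoef gaussCoef ratioG
  have hP := (prodP_pos n hn m).ne'
  have hf : ((Nat.factorial m : ℝ)) ≠ 0 := by
    exact_mod_cast (Nat.factorial_pos m).ne'
  have h3m : 3*m = (3*m - 1) + 1 := by omega
  rw [one_div, div_inv_eq_mul, h3m, pow_succ, Nat.add_sub_cancel]
  field_simp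
  ring

lemma ratioG_step (n : ℕ) (hn : 1 ≤ n) (m : ℕ) (hm : 2*n + 2 ≤ m) :
    (3/2 : ℝ) * ratioG n m ≤ ratioG n (m+1) := by
  have hm1 : 1 ≤ m := by omega
  have hP := prodP_pos n hn m
  have hf : (0:ℝ) < (Nat.factorial m : ℝ) := by exact_mod_cast Nat.factorial_pos m
  have hf2 : (0:ℝ) < (Nat.factorial (2*m - 2) : ℝ) := by
    exact_mod_cast Nat.factorial_pos _
  have hmR : (0:ℝ) < (m:ℝ) := by exact_mod_cast hm1
  -- rewrite ratioG n (m+1)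
  have hfac : (Nat.factorial (2*(m+1) - 2) : ℝ)
      = (2*(m:ℝ)) * (2*(m:ℝ) - 1) * (Nat.factorial (2*m - 2) : ℝ) := by
    have h1 : 2*(m+1) - 2 = (2*m - 2) + 1 + 1 := by omega
    rw [h1, Nat.factorial_succ, Nat.factorial_succ]
    push_cast
    have h2 : ((2*m - 2 : ℕ) : ℝ) = 2*(m:ℝ) - 2 := by
      have : (2:ℕ) ≤ 2*m := by omega
      push_cast [Nat.cast_sub this]
      ring
    rw [h2]; ring
  have hfacm : (Nat.factorial (m+1) : ℝ) = ((m:ℝ)+1) * (Nat.factorial m : ℝ) := by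
    rw [Nat.factorial_succ]; push_cast; ring
  have hprod : (∏ j ∈ Finset.range (m+1), ((n : ℝ) + 2*(j : ℝ)))
      = (∏ j ∈ Finset.range m, ((n : ℝ) + 2*(j : ℝ))) * ((n:ℝ) + 2*(m:ℝ)) := by
    rw [Finset.prod_range_succ]
  have hG : ratioG n (m+1) = ratioG n m * ((2*(2*(m:ℝ) - 1)) / ((n:ℝ) + 2*(m:ℝ))) := by
    unfold ratioG
    rw [hfac, hfacm, hprod]
    have hnm : (0:ℝ) < (n:ℝ) + 2*(m:ℝ) := by
      have : (1:ℝ) ≤ (n:ℝ) := by exact_mod_cast hn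
      linarith
    field_simp
    push_cast
    ring
  rw [hG]
  have hratio : (3/2 : ℝ) ≤ (2*(2*(m:ℝ) - 1)) / ((n:ℝ) + 2*(m:ℝ)) := by
    have hnm : (0:ℝ) < (n:ℝ) + 2*(m:ℝ) := by
      have h1 : (1:ℝ) ≤ (n:ℝ) := by exact_mod_cast hn
      linarith
    rw [le_div_iff₀ hnm]
    have hcast : (2*n + 2 : ℝ) ≤ (m:ℝ) := by exact_mod_cast hm
    have hnR : (0:ℝ) ≤ (n:ℝ) := Nat.cast_nonneg n
    nlinarith
  have hGpos := ratioG_pos n hn m hm1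
  calc (3/2 : ℝ) * ratioG n m ≤ ((2*(2*(m:ℝ) - 1)) / ((n:ℝ) + 2*(m:ℝ))) * ratioG n m := by
        apply mul_le_mul_of_nonneg_right hratio hGpos.le
    _ = ratioG n m * ((2*(2*(m:ℝ) - 1)) / ((n:ℝ) + 2*(m:ℝ))) := by ring

/-- `a_{2m}/b_{2m} = 2m(2m−2)!/(m!·∏_{j=0}^{m−1}(n+2j))`, and this ratio tends
to `+∞` as `m → ∞`. -/
theorem stmt16 (n : ℕ) (hn : 1 ≤ n) :
    (∀ m : ℕ, 1 ≤ m →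
      hplaneCoef n m / gaussCoef m
        = (2*(m : ℝ) * (Nat.factorial (2*m - 2) : ℝ)) /
            ((Nat.factorial m : ℝ) * ∏ j ∈ Finset.range m, ((n : ℝ) + 2*(j : ℝ)))) ∧
    Filter.Tendsto (fun m : ℕ => hplaneCoef n m / gaussCoef m)
      Filter.atTop Filter.atTop := by
  constructor
  · exact fun m hm => hplane_div_gauss n hn m hm
  · set M := 2*n + 2 with hM
    have key : Filter.Tendsto (fun k : ℕ => hplaneCoef n (k + M) / gaussCoef (k + M))
        Filter.atTop Filter.atTop := by
      have heq : ∀ k : ℕ, hplaneCoef n (k + M) / gaussCoef (k + M) = ratioG n (k + M) := by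
        intro k; exact hplane_div_gauss n hn _ (by omega)
      simp only [heq]
      apply tendsto_atTop_of_geom_le (c := 3/2)
      · simpa using ratioG_pos n hn M (by omega)
      · norm_num
      · intro k
        have h := ratioG_step n hn (k + M) (by omega)
        have he : k + M + 1 = k + 1 + M := by omega
        rw [he] at h
        exact h
    exact (Filter.tendsto_add_atTop_iff_nat M).mp key
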